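/- Let Ω ⊂ ℝ^N be a bounded domain with Lipschitz boundary, p ∈ (1,∞), q ∈ [1, p*), and let K be a measurable function such that K·ρ^a ∈ L^r(Ω) for some a ∈ [0, q−1] and r ∈ (1,∞) with 1/r + a/p + (q−a)/p* < 1, where ρ(x) = dist(x, ∂Ω). Then there exist b < p* and C > 0 such that ∫_Ω |K(x)| |u|^{q−1} |v| dx ≤ C ‖u‖^{q−1} ‖v‖_{L^b} for all u, v ∈ W₀^{1,p}(Ω), where ‖·‖ denotes the W₀^{1,p} norm ‖∇·‖_{L^p}. -/

import Mathlib

open MeasureTheory Real Filter Topology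
open scoped ENNReal NNReal

set_option maxHeartbeats 1000000

/-- The `W^{1,p}_0` norm `‖∇u‖_{L^p(Ω)}`. -/
noncomputable def sobNorm {N : ℕ} (p : ℝ) (Ω : Set (EuclideanSpace ℝ (Fin N)))
    (u : EuclideanSpace ℝ (Fin N) → ℝ) : ℝ :=
  (eLpNorm (fun x => ‖fderiv ℝ u x‖) (ENNReal.ofReal p) (volume.restrict Ω)).toReal

/-- The `L^b(Ω)` norm. -/
noncomputable def lpNorm {N : ℕ} (b : ℝ) (Ω : Set (EuclideanSpace ℝ (Fin N)))
    (u : EuclideanSpace ℝ (Fin N) → ℝ) : ℝ :=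
  (eLpNorm u (ENNReal.ofReal b) (volume.restrict Ω)).toReal

/-- Test functions: smooth functions compactly supported in `Ω`, a dense subspace of
`W^{1,p}_0(Ω)`. -/
def TestFun {N : ℕ} (Ω : Set (EuclideanSpace ℝ (Fin N)))
    (u : EuclideanSpace ℝ (Fin N) → ℝ) : Prop :=
  ContDiff ℝ 1 u ∧ HasCompactSupport u ∧ tsupport u ⊆ Ω

/-- `ρ(x)`, the distance to the boundary `∂Ω`. -/
noncomputable def bdist {N : ℕ} (Ω : Set (EuclideanSpace ℝ (Fin N)))
    (x : EuclideanSpace ℝ (Fin N)) : ℝ :=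
  Metric.infDist x (frontier Ω)

/-- `1/p*` where `p* = Np/(N-p)` if `p < N` and `p* = ∞` if `p ≥ N`. -/
noncomputable def pStarInv (p : ℝ) (N : ℕ) : ℝ :=
  if p < N then (N - p) / (N * p) else 0

private lemma fin_of_bound {α : Type*} [MeasurableSpace α] {μ : Measure α}
    {F : Type*} [NormedAddCommGroup F]
    (hμ : μ Set.univ < ⊤) {f : α → F} {e : ℝ≥0∞} {M : ℝ} (h : ∀ᵐ x ∂μ, ‖f x‖ ≤ M) :
    eLpNorm f e μ < ⊤ := by
  refine lt_of_le_of_lt (eLpNorm_le_of_ae_bound h) ?_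
  exact ENNReal.mul_lt_top
    (ENNReal.rpow_lt_top_of_nonneg (by positivity) hμ.ne) ENNReal.ofReal_lt_top

private lemma sobolev_aux {N : ℕ} (hN : 2 ≤ N) (Ω : Set (EuclideanSpace ℝ (Fin N)))
    (hΩb : Bornology.IsBounded Ω) {p s : ℝ} (hp : 1 < p) (hs0 : 0 < s)
    (hts : pStarInv p N < 1/s) :
    ∃ CS > 0, ∀ u, TestFun Ω u →
      (eLpNorm u (ENNReal.ofReal s) (volume.restrict Ω)).toReal ≤ CS * sobNorm p Ω u := by
  have hp0 : (0:ℝ) < p := by linarith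
  have hN0 : (0:ℝ) < N := by positivity
  have hNR : (2:ℝ) ≤ N := by exact_mod_cast hN
  set i4 : ℝ := 1/s with hi4
  have hi40 : 0 < i4 := by positivity
  set m : ℝ := max (1/p) (min 1 (i4 + 1/(N:ℝ))) with hm
  have hm_pos : 0 < m := lt_of_lt_of_le (by positivity) (le_max_left _ _)
  have hm_le1 : m ≤ 1 := by
    apply max_le
    · rw [div_le_one hp0]; linarith
    · exact min_le_left _ _
  have hmN : 1/(N:ℝ) < m := by
    refine lt_of_lt_of_le (lt_min ?_ ?_) (le_max_right _ _)
    · rw [div_lt_one hN0]; linarith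
    · linarith
  have hm_invp : 1/p ≤ m := le_max_left _ _
  have hm_sub : m - 1/N ≤ i4 := by
    rw [sub_le_iff_le_add]
    apply max_le
    · rcases lt_or_ge p N with h | h
      · have : pStarInv p N = 1/p - 1/N := by
          rw [pStarInv, if_pos h, div_sub_div _ _ (ne_of_gt hp0) (ne_of_gt hN0),
            mul_comm p (N:ℝ)]
          norm_num
        rw [this] at hts; linarith
      · have h1 : 1/p ≤ 1/N := one_div_le_one_div_of_le hN0 h
        linarith
    · exact min_le_right _ _
  set P : ℝ := 1/m with hP
  have hP_pos : 0 < P := by positivity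
  set pt : ℝ≥0 := P.toNNReal with hpt
  set st : ℝ≥0 := s.toNNReal with hst
  have hptR : (pt : ℝ) = P := Real.coe_toNNReal _ hP_pos.le
  have hstR : (st : ℝ) = s := Real.coe_toNNReal _ hs0.le
  have hfr : Module.finrank ℝ (EuclideanSpace ℝ (Fin N)) = N := finrank_euclideanSpace_fin
  have hpt1 : 1 ≤ pt := by
    rw [← NNReal.coe_le_coe, hptR]; rw [NNReal.coe_one]
    rw [le_div_iff₀ hm_pos]; linarith
  have h2p : pt < (N : ℝ≥0) := by
    rw [← NNReal.coe_lt_coe, hptR]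
    push_cast
    rw [div_lt_iff₀ hm_pos]
    have h1 : (N:ℝ) * (1/N) = 1 := by field_simp
    nlinarith [mul_lt_mul_of_pos_left hmN hN0]
  have hpq : (pt : ℝ)⁻¹ - (Module.finrank ℝ (EuclideanSpace ℝ (Fin N)) : ℝ)⁻¹ ≤ ((st : ℝ))⁻¹ := by
    rw [hfr, hptR, hstR, hP]
    rw [one_div, inv_inv]
    rw [← one_div s, ← hi4, ← one_div (N:ℝ)]
    linarith
  have hμfin : (volume.restrict Ω) Set.univ < ⊤ := by
    rw [Measure.restrict_apply_univ]; exact hΩb.measure_lt_top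
  have hPp : P ≤ p := by
    have := one_div_le_one_div_of_le (by positivity : (0:ℝ) < 1/p) hm_invp
    rwa [one_div_one_div] at this
  set C1 : ℝ≥0 := eLpNormLESNormFDerivOfLeConst ℝ volume Ω pt st with hC1
  set w : ℝ≥0∞ :=
    (volume.restrict Ω) Set.univ ^ (1/((pt : ℝ≥0∞)).toReal - 1/(ENNReal.ofReal p).toReal)
    with hw
  have hptT : ((pt : ℝ≥0∞)).toReal = P := by simp [hptR]
  have hw_fin : w < ⊤ := by
    apply ENNReal.rpow_lt_top_of_nonneg _ hμfin.ne
    rw [hptT, ENNReal.toReal_ofReal hp0.le]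
    have := one_div_le_one_div_of_le hP_pos hPp
    linarith
  refine ⟨(C1 * w).toReal + 1, by positivity, ?_⟩
  intro u hu
  obtain ⟨hu1, hu2, hu3⟩ := hu
  have hsupp : Function.support u ⊆ Ω := (subset_tsupport u).trans hu3
  have h2p' : (pt : ℝ≥0) < (Module.finrank ℝ (EuclideanSpace ℝ (Fin N)) : ℝ≥0) := by
    rw [hfr]; exact_mod_cast h2p
  have hSob := eLpNorm_le_eLpNorm_fderiv_of_le (F := ℝ) volume hu1 hsupp hpt1 h2p' hpq hΩb
  have hrestr_u : eLpNorm u (st : ℝ≥0∞) (volume.restrict Ω) = eLpNorm u st volume :=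
    eLpNorm_restrict_eq_of_support_subset hsupp
  have hsuppf : Function.support (fderiv ℝ u) ⊆ Ω := (support_fderiv_subset ℝ).trans hu3
  have hrestr_f : eLpNorm (fderiv ℝ u) (pt : ℝ≥0∞) (volume.restrict Ω)
      = eLpNorm (fderiv ℝ u) (pt : ℝ≥0∞) volume :=
    eLpNorm_restrict_eq_of_support_subset (f := fderiv ℝ u) hsuppf
  have hcont_f : Continuous (fderiv ℝ u) := hu1.continuous_fderiv one_ne_zero
  have hle : (pt : ℝ≥0∞) ≤ ENNReal.ofReal p := by
    have : (pt : ℝ≥0∞) = ENNReal.ofReal P := rfl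
    rw [this]; exact ENNReal.ofReal_le_ofReal hPp
  have hmono : eLpNorm (fderiv ℝ u) (pt : ℝ≥0∞) (volume.restrict Ω) ≤
      eLpNorm (fderiv ℝ u) (ENNReal.ofReal p) (volume.restrict Ω) * w :=
    eLpNorm_le_eLpNorm_mul_rpow_measure_univ hle hcont_f.aestronglyMeasurable
  have hffin : eLpNorm (fderiv ℝ u) (ENNReal.ofReal p) (volume.restrict Ω) < ⊤ := by
    obtain ⟨M, hM⟩ := (hu2.fderiv ℝ).exists_bound_of_continuous hcont_f
    exact fin_of_bound hμfin (Filter.Eventually.of_forall hM)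
  have chain : eLpNorm u (ENNReal.ofReal s) (volume.restrict Ω) ≤
      (C1 * w) * eLpNorm (fderiv ℝ u) (ENNReal.ofReal p) (volume.restrict Ω) := by
    have e0 : ENNReal.ofReal s = (st : ℝ≥0∞) := rfl
    rw [e0, hrestr_u]
    calc eLpNorm u st volume ≤ C1 * eLpNorm (fderiv ℝ u) pt volume := hSob
    _ = C1 * eLpNorm (fderiv ℝ u) (pt : ℝ≥0∞) (volume.restrict Ω) := by rw [hrestr_f]
    _ ≤ C1 * (eLpNorm (fderiv ℝ u) (ENNReal.ofReal p) (volume.restrict Ω) * w) := by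
        gcongr
    _ = (C1 * w) * eLpNorm (fderiv ℝ u) (ENNReal.ofReal p) (volume.restrict Ω) := by
        ring
  have hrhs_fin : (C1 * w) * eLpNorm (fderiv ℝ u) (ENNReal.ofReal p) (volume.restrict Ω) < ⊤ := by
    exact ENNReal.mul_lt_top (ENNReal.mul_lt_top ENNReal.coe_lt_top hw_fin) hffin
  calc (eLpNorm u (ENNReal.ofReal s) (volume.restrict Ω)).toReal
      ≤ ((C1 * w) * eLpNorm (fderiv ℝ u) (ENNReal.ofReal p) (volume.restrict Ω)).toReal :=
        ENNReal.toReal_mono hrhs_fin.ne chain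
    _ = (C1 * w).toReal * (eLpNorm (fderiv ℝ u) (ENNReal.ofReal p) (volume.restrict Ω)).toReal :=
        ENNReal.toReal_mul
    _ = (C1 * w).toReal * sobNorm p Ω u := by rw [sobNorm, eLpNorm_norm]
    _ ≤ ((C1 * w).toReal + 1) * sobNorm p Ω u := by
        apply mul_le_mul_of_nonneg_right (by linarith) ENNReal.toReal_nonneg

private lemma frontier_nonempty {N : ℕ} (hN : 2 ≤ N) {Ω : Set (EuclideanSpace ℝ (Fin N))}
    (hΩb : Bornology.IsBounded Ω) (hΩne : Ω.Nonempty) : (frontier Ω).Nonempty := by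
  haveI : Nonempty (Fin N) := ⟨⟨0, by omega⟩⟩
  by_contra h
  rw [Set.not_nonempty_iff_eq_empty] at h
  rcases frontier_eq_empty_iff.mp h with h | h
  · exact hΩne.ne_empty h
  · rw [h] at hΩb
    exact NormedSpace.unbounded_univ ℝ (EuclideanSpace ℝ (Fin N)) hΩb

private lemma rho_pos {N : ℕ} (hN : 2 ≤ N) {Ω : Set (EuclideanSpace ℝ (Fin N))}
    (hΩo : IsOpen Ω) (hΩb : Bornology.IsBounded Ω) (hΩne : Ω.Nonempty)
    {x : EuclideanSpace ℝ (Fin N)} (hx : x ∈ Ω) : 0 < bdist Ω x := by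
  rw [bdist, ← isClosed_frontier.notMem_iff_infDist_pos (frontier_nonempty hN hΩb hΩne)]
  intro hmem
  exact (hΩo.inter_frontier_eq ▸ Set.mem_inter hx hmem : x ∈ (∅ : Set _))

private lemma rpow_split {w : ℝ} (a c : ℝ) (hw : 0 ≤ w) (ha : 0 ≤ a) (hc : 0 ≤ c) :
    w ^ a * w ^ c = w ^ (a + c) := by
  rcases eq_or_ne (a + c) 0 with h | h
  · have ha' : a = 0 := by linarith
    have hc' : c = 0 := by linarith
    simp [ha', hc']
  · rw [Real.rpow_add' hw h]

/-- bound for `u/ρ` on all of space for a test function. -/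
private lemma udivrho_bound {N : ℕ} (hN : 2 ≤ N) {Ω : Set (EuclideanSpace ℝ (Fin N))}
    (hΩo : IsOpen Ω) (hΩb : Bornology.IsBounded Ω) (hΩne : Ω.Nonempty)
    {u : EuclideanSpace ℝ (Fin N) → ℝ} (hu : TestFun Ω u) :
    ∃ M : ℝ, ∀ x, |u x / bdist Ω x| ≤ M := by
  obtain ⟨hu1, hu2, hu3⟩ := hu
  rcases Set.eq_empty_or_nonempty (tsupport u) with hts | hts
  · refine ⟨0, fun x => ?_⟩
    have hx : u x = 0 := image_eq_zero_of_notMem_tsupport (by simp [hts])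
    simp [hx]
  · obtain ⟨x₀, hx₀K, hmin⟩ := hu2.exists_isMinOn hts
      (Metric.continuous_infDist_pt (frontier Ω)).continuousOn
    have hρ₀ : 0 < Metric.infDist x₀ (frontier Ω) := rho_pos hN hΩo hΩb hΩne (hu3 hx₀K)
    obtain ⟨Mu, hMu⟩ := hu2.exists_bound_of_continuous hu1.continuous
    have hMu0 : 0 ≤ Mu := le_trans (norm_nonneg _) (hMu x₀)
    refine ⟨Mu / Metric.infDist x₀ (frontier Ω), fun x => ?_⟩
    by_cases hx : x ∈ tsupport u
    · rw [abs_div]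
      simp only [bdist]
      rw [abs_of_nonneg Metric.infDist_nonneg]
      apply div_le_div₀ hMu0 ?_ hρ₀ (hmin hx)
      exact (Real.norm_eq_abs (u x)) ▸ hMu x
    · have hx0 : u x = 0 := image_eq_zero_of_notMem_tsupport hx
      rw [hx0, zero_div, abs_zero]
      positivity

private lemma holder_two {α : Type*} [MeasurableSpace α] {μ : Measure α} {φ f : α → ℝ}
    (hφ : AEStronglyMeasurable φ μ) (hf : AEStronglyMeasurable f μ) {c d : ℝ}
    (hc : 0 ≤ c) (hd : 0 ≤ d) :
    eLpNorm (fun x => φ x * f x) (ENNReal.ofReal (c + d))⁻¹ μ ≤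
      eLpNorm φ (ENNReal.ofReal c)⁻¹ μ * eLpNorm f (ENNReal.ofReal d)⁻¹ μ := by
  have h : (fun x => φ x * f x) = φ • f := rfl
  rw [h]
  haveI : ENNReal.HolderTriple (ENNReal.ofReal c)⁻¹ (ENNReal.ofReal d)⁻¹
      (ENNReal.ofReal (c + d))⁻¹ := ⟨by simp only [inv_inv]; exact (ENNReal.ofReal_add hc hd).symm⟩
  exact eLpNorm_smul_le_mul_eLpNorm hf hφ

private lemma rpow_norm_eLpNorm_le {α : Type*} [MeasurableSpace α] {μ : Measure α}
    {g : α → ℝ} {e a : ℝ} (ha : 0 ≤ a) (he : 0 < e) :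
    eLpNorm (fun x => ‖g x‖ ^ a) (ENNReal.ofReal (a / e))⁻¹ μ ≤
      (eLpNorm g (ENNReal.ofReal e) μ) ^ a := by
  rcases eq_or_lt_of_le ha with h0 | hpos
  · simp only [← h0, Real.rpow_zero, zero_div, ENNReal.ofReal_zero, ENNReal.inv_zero]
    refine le_trans (eLpNorm_le_of_ae_bound (C := 1)
      (Filter.Eventually.of_forall (fun x => by simp))) ?_
    simp
  · rw [eLpNorm_norm_rpow g hpos]
    apply le_of_eq
    congr 1
    rw [← ENNReal.ofReal_inv_of_pos (by positivity), ← ENNReal.ofReal_mul (by positivity)]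
    congr 1
    field_simp

theorem stmt_0 {N : ℕ} (hN : 2 ≤ N) (Ω : Set (EuclideanSpace ℝ (Fin N)))
    (hΩo : IsOpen Ω) (hΩb : Bornology.IsBounded Ω) (hΩne : Ω.Nonempty)
    (p q a r : ℝ) (hp : 1 < p) (hq1 : 1 ≤ q)
    (hq : p < N → q < N * p / (N - p))
    (ha0 : 0 ≤ a) (ha1 : a ≤ q - 1) (hr : 1 < r)
    (K : EuclideanSpace ℝ (Fin N) → ℝ) (hKmeas : Measurable K)
    (hKr : MemLp (fun x => K x * bdist Ω x ^ a) (ENNReal.ofReal r) (volume.restrict Ω))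
    (hsub : 1 / r + a / p + (q - a) * pStarInv p N < 1)
    -- the Hardy inequality, valid since `Ω` has Lipschitz boundary
    (hHardy : ∃ CH > 0, ∀ u, TestFun Ω u →
      lpNorm p Ω (fun x => u x / bdist Ω x) ≤ CH * sobNorm p Ω u) :
    ∃ b C : ℝ, (p < N → b < N * p / (N - p)) ∧ 0 < C ∧
      ∀ u v, TestFun Ω u → TestFun Ω v →
        ∫ x in Ω, |K x| * |u x| ^ (q - 1) * |v x| ≤
          C * sobNorm p Ω u ^ (q - 1) * lpNorm b Ω v := by
  have hp0 : (0:ℝ) < p := by linarith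
  have hr0 : (0:ℝ) < r := by linarith
  have hN0 : (0:ℝ) < N := by positivity
  set μ := volume.restrict Ω with hμdef
  have hμfin : μ Set.univ < ⊤ := by
    rw [hμdef, Measure.restrict_apply_univ]; exact hΩb.measure_lt_top
  set t := pStarInv p N with htdef
  have ht0 : 0 ≤ t := by
    rw [htdef, pStarInv]
    split
    · next h => exact div_nonneg (by linarith) (by positivity)
    · exact le_rfl
  set ε : ℝ := 1 - (1 / r + a / p + (q - a) * t) with hεdef
  have hε : 0 < ε := by simp only [hεdef]; linarith
  have hqa : 1 ≤ q - a := by linarith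
  set δ : ℝ := ε / (q - a) with hδdef
  have hδ : 0 < δ := div_pos hε (by linarith)
  set i4 : ℝ := t + δ with hi4def
  have hi40 : 0 < i4 := by simp only [hi4def]; linarith
  have hkeyδ : (q - a) * δ = ε := by
    rw [hδdef]; field_simp
  have hkey : (q - a) * i4 = (q - a) * t + ε := by
    rw [hi4def, mul_add, hkeyδ]
  have hsum : 1/r + (a/p + ((q-1-a)*i4 + i4)) = 1 := by
    have h1 : (q-1-a)*i4 + i4 = (q-a)*i4 := by ring
    rw [h1, hkey]
    simp only [hεdef]; ring
  have hi4lt1 : i4 < 1 := by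
    have h2 : i4 ≤ (q-a)*i4 := le_mul_of_one_le_left hi40.le hqa
    have h3 : (q-a)*t + ε = 1 - 1/r - a/p := by simp only [hεdef]; ring
    have h4 : 0 < 1/r := by positivity
    have h5 : 0 ≤ a/p := by positivity
    nlinarith
  set b : ℝ := 1/i4 with hbdef
  have hb0 : 0 < b := by positivity
  have hbstar : p < N → b < N * p / (N - p) := by
    intro hpN
    have htpos : 0 < t := by
      rw [htdef, pStarInv, if_pos hpN]
      exact div_pos (by linarith) (by positivity)
    have ht_eq : N * p / (N - p) = 1 / t := by
      rw [htdef, pStarInv, if_pos hpN, one_div_div]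
    rw [ht_eq, hbdef]
    apply one_div_lt_one_div_of_lt htpos
    simp only [hi4def]; linarith
  have hts : pStarInv p N < 1/b := by
    rw [hbdef, one_div_one_div, ← htdef, hi4def]; linarith
  obtain ⟨CS, hCS, hSob⟩ := sobolev_aux hN Ω hΩb hp hb0 hts
  obtain ⟨CH, hCH, hHard⟩ := hHardy
  set ρ := bdist Ω with hρdef
  set A := eLpNorm (fun x => K x * ρ x ^ a) (ENNReal.ofReal r) μ with hAdef
  set C₁ : ℝ := A.toReal with hC₁
  have hC₁0 : 0 ≤ C₁ := ENNReal.toReal_nonneg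
  have hq1a : (0:ℝ) ≤ q - 1 - a := by linarith
  refine ⟨b, (C₁ + 1) * CH ^ a * CS ^ (q-1-a), hbstar, by positivity, ?_⟩
  intro u v hu hv
  set S := sobNorm p Ω u with hS
  have hS0 : 0 ≤ S := ENNReal.toReal_nonneg
  have hρc : Continuous ρ := Metric.continuous_infDist_pt _
  set f1 : EuclideanSpace ℝ (Fin N) → ℝ := fun x => ‖K x * ρ x ^ a‖ with hf1
  set f2 : EuclideanSpace ℝ (Fin N) → ℝ := fun x => ‖u x / ρ x‖ ^ a with hf2
  set f3 : EuclideanSpace ℝ (Fin N) → ℝ := fun x => ‖u x‖ ^ (q-1-a) with hf3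
  set f4 : EuclideanSpace ℝ (Fin N) → ℝ := fun x => ‖v x‖ with hf4
  have hm1 : AEStronglyMeasurable f1 μ :=
    ((hKmeas.mul (hρc.rpow_const (fun x => Or.inr ha0)).measurable).norm).aestronglyMeasurable
  have hm2 : AEStronglyMeasurable f2 μ := by
    have h1 : Measurable fun x => ‖u x / ρ x‖ :=
      ((hu.1.continuous.measurable).div hρc.measurable).norm
    exact ((Real.continuous_rpow_const ha0).measurable.comp h1).aestronglyMeasurable
  have hm3 : AEStronglyMeasurable f3 μ :=
    (hu.1.continuous.norm.rpow_const (fun x => Or.inr hq1a)).aestronglyMeasurable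
  have hm4 : AEStronglyMeasurable f4 μ := hv.1.continuous.norm.aestronglyMeasurable
  set H := eLpNorm (fun x => u x / ρ x) (ENNReal.ofReal p) μ with hHdef
  set U := eLpNorm u (ENNReal.ofReal b) μ with hUdef
  set V := eLpNorm v (ENNReal.ofReal b) μ with hVdef
  -- finiteness
  have hHfin : H < ⊤ := by
    obtain ⟨M, hM⟩ := udivrho_bound hN hΩo hΩb hΩne hu
    exact fin_of_bound hμfin (Filter.Eventually.of_forall
      (fun x => (Real.norm_eq_abs _).le.trans ((hM x).trans le_rfl)))
  have hUfin : U < ⊤ := by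
    obtain ⟨M, hM⟩ := hu.2.1.exists_bound_of_continuous hu.1.continuous
    exact fin_of_bound hμfin (Filter.Eventually.of_forall hM)
  have hVfin : V < ⊤ := by
    obtain ⟨M, hM⟩ := hv.2.1.exists_bound_of_continuous hv.1.continuous
    exact fin_of_bound hμfin (Filter.Eventually.of_forall hM)
  have hAfin : A < ⊤ := hKr.2
  -- Hölder chain
  set G : EuclideanSpace ℝ (Fin N) → ℝ := fun x => f1 x * (f2 x * (f3 x * f4 x)) with hG
  have hj2 : (0:ℝ) ≤ a/p := by positivity
  have hj3 : (0:ℝ) ≤ (q-1-a)*i4 := by positivity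
  have hj4 : (0:ℝ) ≤ i4 := hi40.le
  have hhol : eLpNorm G 1 μ ≤
      eLpNorm f1 (ENNReal.ofReal (1/r))⁻¹ μ *
      (eLpNorm f2 (ENNReal.ofReal (a/p))⁻¹ μ *
      (eLpNorm f3 (ENNReal.ofReal ((q-1-a)*i4))⁻¹ μ *
       eLpNorm f4 (ENNReal.ofReal i4)⁻¹ μ)) := by
    have e1 : (1:ℝ≥0∞) = (ENNReal.ofReal (1/r + (a/p + ((q-1-a)*i4 + i4))))⁻¹ := by
      rw [hsum]; simp
    rw [hG, e1]
    refine le_trans (holder_two hm1 ((hm2.mul (hm3.mul hm4)) : AEStronglyMeasurable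
      (fun x => f2 x * (f3 x * f4 x)) μ) (by positivity) (by positivity)) ?_
    gcongr
    refine le_trans (holder_two hm2 ((hm3.mul hm4) : AEStronglyMeasurable
      (fun x => f3 x * f4 x) μ) hj2 (by positivity)) ?_
    gcongr
    exact holder_two hm3 hm4 hj3 hj4
  -- identify factors
  have hfac1 : eLpNorm f1 (ENNReal.ofReal (1/r))⁻¹ μ = A := by
    rw [hf1, eLpNorm_norm, hAdef, one_div, ENNReal.ofReal_inv_of_pos hr0, inv_inv]
  have hfac2 : eLpNorm f2 (ENNReal.ofReal (a/p))⁻¹ μ ≤ H ^ a :=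
    rpow_norm_eLpNorm_le ha0 hp0
  have hfac3 : eLpNorm f3 (ENNReal.ofReal ((q-1-a)*i4))⁻¹ μ ≤ U ^ (q-1-a) := by
    have h1 : (q-1-a)*i4 = (q-1-a)/b := by rw [hbdef]; field_simp
    rw [h1]
    exact rpow_norm_eLpNorm_le hq1a hb0
  have hfac4 : eLpNorm f4 (ENNReal.ofReal i4)⁻¹ μ = V := by
    rw [hf4, eLpNorm_norm, hVdef]
    congr 1
    rw [hbdef, one_div, ENNReal.ofReal_inv_of_pos hi40]
  have hGle : eLpNorm G 1 μ ≤ A * (H ^ a * (U ^ (q-1-a) * V)) := by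
    refine le_trans hhol ?_
    rw [hfac1, hfac4]
    gcongr
  have hR_fin : A * (H ^ a * (U ^ (q-1-a) * V)) < ⊤ := by
    apply ENNReal.mul_lt_top hAfin
    apply ENNReal.mul_lt_top (ENNReal.rpow_lt_top_of_nonneg ha0 hHfin.ne)
    exact ENNReal.mul_lt_top (ENNReal.rpow_lt_top_of_nonneg hq1a hUfin.ne) hVfin
  have hGmeas : AEStronglyMeasurable G μ := hm1.mul (hm2.mul (hm3.mul hm4))
  have hGfin : eLpNorm G 1 μ < ⊤ := lt_of_le_of_lt hGle hR_fin
  -- a.e. identity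
  have heq : (fun x => |K x| * |u x| ^ (q - 1) * |v x|) =ᵐ[μ] G := by
    rw [hμdef]
    filter_upwards [ae_restrict_mem hΩo.measurableSet] with x hx
    have hρx : 0 < ρ x := rho_pos hN hΩo hΩb hΩne hx
    have hρa : (0:ℝ) < ρ x ^ a := Real.rpow_pos_of_pos hρx a
    simp only [hG, hf1, hf2, hf3, hf4, Real.norm_eq_abs]
    rw [abs_mul, abs_of_pos hρa, abs_div, abs_of_pos hρx,
      Real.div_rpow (abs_nonneg _) hρx.le]
    have hsplit : |u x| ^ a * |u x| ^ (q-1-a) = |u x| ^ (q-1) := by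
      rw [rpow_split a (q-1-a) (abs_nonneg _) ha0 hq1a]
      norm_num
    rw [← hsplit]
    field_simp
  -- final chain
  have hHard' : H.toReal ≤ CH * S := hHard u hu
  have hSob' : U.toReal ≤ CS * S := hSob u hu
  calc ∫ x in Ω, |K x| * |u x| ^ (q - 1) * |v x|
      = ∫ x, G x ∂μ := integral_congr_ae heq
    _ ≤ |∫ x, G x ∂μ| := le_abs_self _
    _ = ‖∫ x, G x ∂μ‖ := (Real.norm_eq_abs _).symm
    _ ≤ ∫ x, ‖G x‖ ∂μ := norm_integral_le_integral_norm _
    _ = (∫⁻ x, ‖G x‖ₑ ∂μ).toReal := integral_norm_eq_lintegral_enorm hGmeas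
    _ = (eLpNorm G 1 μ).toReal := by rw [eLpNorm_one_eq_lintegral_enorm]
    _ ≤ (A * (H ^ a * (U ^ (q-1-a) * V))).toReal := ENNReal.toReal_mono hR_fin.ne hGle
    _ = C₁ * (H.toReal ^ a * (U.toReal ^ (q-1-a) * V.toReal)) := by
        rw [ENNReal.toReal_mul, ENNReal.toReal_mul, ENNReal.toReal_mul,
          ← ENNReal.toReal_rpow, ← ENNReal.toReal_rpow]
    _ ≤ C₁ * ((CH * S) ^ a * ((CS * S) ^ (q-1-a) * V.toReal)) := by
        gcongr
    _ = C₁ * CH ^ a * CS ^ (q-1-a) * (S ^ a * S ^ (q-1-a)) * V.toReal := by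
        rw [Real.mul_rpow hCH.le hS0, Real.mul_rpow hCS.le hS0]; ring
    _ = C₁ * CH ^ a * CS ^ (q-1-a) * S ^ (q-1) * V.toReal := by
        rw [rpow_split a (q-1-a) hS0 ha0 hq1a]
        norm_num
    _ ≤ (C₁ + 1) * CH ^ a * CS ^ (q-1-a) * S ^ (q-1) * V.toReal := by
        have h1 : 0 ≤ S ^ (q-1) := Real.rpow_nonneg hS0 _
        have h2 : (0:ℝ) ≤ V.toReal := ENNReal.toReal_nonneg
        gcongr
        linarith
    _ = (C₁ + 1) * CH ^ a * CS ^ (q-1-a) * S ^ (q-1) * lpNorm b Ω v := by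
        rw [_root_.lpNorm]
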